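/- Let E ⊆ ℝ^d satisfy the Birkhoff property and suppose that E + q₀ ≠ E for some q₀ ∈ ℤ^d. If p and p′ are vectors in ℝ^d with |p| = |p′| = 1 such that for every q ∈ ℤ^d, q·p > 0 implies E + q ⊆ E, and for every q ∈ ℤ^d, q·p′ > 0 implies E + q ⊆ E, then p = p′. -/

import Mathlib

open scoped RealInnerProductSpace

noncomputable def vec {d : ℕ} (q : Fin d → ℤ) : EuclideanSpace ℝ (Fin d) :=
  WithLp.toLp 2 (fun i => (q i : ℝ))

/-- The translate `E + q` of a set `E ⊆ ℝ^d` by an integer vector `q ∈ ℤ^d`. -/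
def transl {d : ℕ} (E : Set (EuclideanSpace ℝ (Fin d))) (q : Fin d → ℤ) :
    Set (EuclideanSpace ℝ (Fin d)) :=
  (fun x => x + vec q) '' E

lemma vec_add {d : ℕ} (a b : Fin d → ℤ) : vec (a + b) = vec a + vec b := by
  ext i
  show ((a i + b i : ℤ) : ℝ) = (a i : ℝ) + (b i : ℝ)
  push_cast
  ring

lemma vec_zero {d : ℕ} : vec (0 : Fin d → ℤ) = 0 := by
  ext i
  show ((0 : ℤ) : ℝ) = 0
  simp

lemma vec_neg {d : ℕ} (a : Fin d → ℤ) : vec (-a) = -vec a := by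
  ext i
  show ((-(a i) : ℤ) : ℝ) = -(a i : ℝ)
  push_cast
  ring

lemma vec_nsmul {d : ℕ} (n : ℕ) (a : Fin d → ℤ) : vec (n • a) = (n : ℝ) • vec a := by
  ext i
  show (((n • a) i : ℤ) : ℝ) = (n : ℝ) * (a i : ℝ)
  simp [Pi.smul_apply]

lemma transl_transl {d : ℕ} (E : Set (EuclideanSpace ℝ (Fin d))) (a b : Fin d → ℤ) :
    transl (transl E a) b = transl E (a + b) := by
  simp only [transl, Set.image_image, vec_add, add_assoc]

lemma transl_zero {d : ℕ} (E : Set (EuclideanSpace ℝ (Fin d))) : transl E 0 = E := by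
  simp [transl, vec_zero]

lemma transl_mono {d : ℕ} {E F : Set (EuclideanSpace ℝ (Fin d))} (h : E ⊆ F)
    (a : Fin d → ℤ) : transl E a ⊆ transl F a :=
  Set.image_mono h

lemma norm_le_of_abs_le {d : ℕ} (z : EuclideanSpace ℝ (Fin d)) (c : ℝ) (hc : 0 ≤ c)
    (h : ∀ i, |z i| ≤ c) : ‖z‖ ≤ Real.sqrt d * c := by
  rw [EuclideanSpace.norm_eq]
  have : (∑ i : Fin d, ‖z i‖ ^ 2) ≤ d * c ^ 2 := by
    calc (∑ i : Fin d, ‖z i‖ ^ 2) ≤ ∑ _i : Fin d, c ^ 2 := by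
          apply Finset.sum_le_sum
          intro i _
          have := h i
          rw [Real.norm_eq_abs]
          nlinarith [abs_nonneg (z i)]
      _ = d * c ^ 2 := by simp [Finset.sum_const]
  calc Real.sqrt (∑ i : Fin d, ‖z i‖ ^ 2) ≤ Real.sqrt (d * c ^ 2) :=
        Real.sqrt_le_sqrt this
    _ = Real.sqrt d * c := by
        rw [Real.sqrt_mul (by positivity), Real.sqrt_sq hc]

/-- Uniqueness of the direction in the Birkhoff property: if `E` satisfies the Birkhoff
property, `E + q₀ ≠ E` for some `q₀ ∈ ℤ^d`, and `p, p'` are unit vectors such that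
`q·p > 0` implies `E + q ⊆ E` and `q·p' > 0` implies `E + q ⊆ E`, then `p = p'`. -/
theorem stmt1 (d : ℕ) (E : Set (EuclideanSpace ℝ (Fin d)))
    (hBirkhoff : ∀ q : Fin d → ℤ, transl E q ⊆ E ∨ E ⊆ transl E q)
    (q₀ : Fin d → ℤ) (hq₀ : transl E q₀ ≠ E)
    (p p' : EuclideanSpace ℝ (Fin d)) (hp : ‖p‖ = 1) (hp' : ‖p'‖ = 1)
    (h1 : ∀ q : Fin d → ℤ, 0 < ⟪vec q, p⟫ → transl E q ⊆ E)
    (h2 : ∀ q : Fin d → ℤ, 0 < ⟪vec q, p'⟫ → transl E q ⊆ E) :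
    p = p' := by
  by_contra hne
  -- Step 1: ⟪p, p'⟫ < 1
  have hpp' : ⟪p, p'⟫ < 1 := by
    have hsub : (0 : ℝ) < ‖p - p'‖ ^ 2 := by
      have h0 : p - p' ≠ 0 := sub_ne_zero.mpr hne
      have : (0:ℝ) < ‖p - p'‖ := norm_pos_iff.mpr h0
      positivity
    have := norm_sub_sq_real p p'
    rw [hp, hp'] at this
    nlinarith
  set δ : ℝ := 1 - ⟪p, p'⟫ with hδdef
  have hδ : 0 < δ := by simp only [hδdef]; linarith
  set x : EuclideanSpace ℝ (Fin d) := p - p' with hxdef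
  have hxp : ⟪x, p⟫ = δ := by
    rw [hxdef, inner_sub_left]
    have h₁ : ⟪p, p⟫ = 1 := by rw [real_inner_self_eq_norm_mul_norm, hp]; ring
    have h₂ : ⟪p', p⟫ = ⟪p, p'⟫ := real_inner_comm _ _
    rw [h₁, h₂]
  have hxp' : ⟪x, p'⟫ = -δ := by
    rw [hxdef, inner_sub_left]
    have h₁ : ⟪p', p'⟫ = 1 := by rw [real_inner_self_eq_norm_mul_norm, hp']; ring
    rw [h₁]
    simp [hδdef]
  -- Step 2: choose N large
  obtain ⟨N, hN⟩ := exists_nat_gt (Real.sqrt d / δ)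
  have hNpos : (0 : ℝ) < N := lt_of_le_of_lt (by positivity) hN
  have hNδ : Real.sqrt d < N * δ := (div_lt_iff₀ hδ).mp hN
  -- integer approximation q of N • x
  set q : Fin d → ℤ := fun i => round ((N : ℝ) * x i) with hqdef
  set z : EuclideanSpace ℝ (Fin d) := (N : ℝ)⁻¹ • vec q - x with hzdef
  have hz : ∀ i, |z i| ≤ 1 / N := by
    intro i
    have hzval : z i = (N : ℝ)⁻¹ * (q i : ℝ) - x i := by simp [hzdef, vec]
    have hround : |(N : ℝ) * x i - (round ((N : ℝ) * x i) : ℝ)| ≤ 1 / 2 :=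
      abs_sub_round _
    rw [hzval, hqdef]
    have : (N : ℝ)⁻¹ * (round ((N : ℝ) * x i) : ℝ) - x i
        = -((N : ℝ)⁻¹ * ((N : ℝ) * x i - (round ((N : ℝ) * x i) : ℝ))) := by
      field_simp
      ring
    rw [this, abs_neg, abs_mul, abs_of_pos (by positivity : (0:ℝ) < (N:ℝ)⁻¹)]
    rw [div_eq_mul_inv, mul_comm (1:ℝ)]
    gcongr
    linarith
  have hznorm : ‖z‖ < δ := by
    have h₁ : ‖z‖ ≤ Real.sqrt d * (1 / N) := norm_le_of_abs_le z _ (by positivity) hz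
    have h₂ : Real.sqrt d * (1 / N) < δ := by
      rw [mul_one_div, div_lt_iff₀ hNpos]
      linarith [hNδ]
    linarith
  -- Step 3: key inner products of q
  have hvq : vec q = (N : ℝ) • (x + z) := by
    have : x + z = (N : ℝ)⁻¹ • vec q := by rw [hzdef]; abel
    rw [this, smul_inv_smul₀ (ne_of_gt hNpos)]
  have hzp : |⟪z, p⟫| ≤ ‖z‖ := by
    have := abs_real_inner_le_norm z p
    rwa [hp, mul_one] at this
  have hzp' : |⟪z, p'⟫| ≤ ‖z‖ := by
    have := abs_real_inner_le_norm z p'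
    rwa [hp', mul_one] at this
  have hqp : 0 < ⟪vec q, p⟫ := by
    rw [hvq, real_inner_smul_left, inner_add_left, hxp]
    have : -‖z‖ ≤ ⟪z, p⟫ := neg_le_of_abs_le hzp
    have hpos : 0 < δ + ⟪z, p⟫ := by linarith
    positivity
  have hqp' : ⟪vec q, p'⟫ < 0 := by
    rw [hvq, real_inner_smul_left, inner_add_left, hxp']
    have : ⟪z, p'⟫ ≤ ‖z‖ := le_of_abs_le hzp'
    have hneg : -δ + ⟪z, p'⟫ < 0 := by linarith
    exact mul_neg_of_pos_of_neg hNpos hneg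
  -- Step 4: choose n large
  set a : ℝ := ⟪vec q, p⟫ with hadef
  obtain ⟨n, hn⟩ := exists_nat_gt (|⟪vec q₀, p⟫| / a)
  have hna : |⟪vec q₀, p⟫| < n * a := (div_lt_iff₀ hqp).mp hn
  have hnpos : 0 < n := by
    by_contra h
    push_neg at h
    interval_cases n
    simp at hna
    exact absurd hna (not_lt.mpr (abs_nonneg _))
  -- inner product computations for shifted vectors
  have hinner_nsmul : ⟪vec (n • q), p⟫ = n * a := by
    rw [vec_nsmul, real_inner_smul_left, hadef]
  have hA : 0 < ⟪vec (q₀ + n • q), p⟫ := by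
    rw [vec_add, inner_add_left, hinner_nsmul]
    have := neg_abs_le (⟪vec q₀, p⟫)
    linarith
  have hB : 0 < ⟪vec (-q₀ + n • q), p⟫ := by
    rw [vec_add, vec_neg, inner_add_left, inner_neg_left, hinner_nsmul]
    have := le_abs_self (⟪vec q₀, p⟫)
    linarith
  have hC : 0 < ⟪vec (-(n • q)), p'⟫ := by
    rw [vec_neg, vec_nsmul, inner_neg_left, real_inner_smul_left]
    have : (0:ℝ) < n := by exact_mod_cast hnpos
    nlinarith
  -- Step 5: derive transl E q₀ = E
  have hEA : transl E (q₀ + n • q) ⊆ E := h1 _ hA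
  have hEB : transl E (-q₀ + n • q) ⊆ E := h1 _ hB
  have hEC : transl E (-(n • q)) ⊆ E := h2 _ hC
  have key₁ : transl E q₀ ⊆ E := by
    have step : transl (transl E (q₀ + n • q)) (-(n • q)) ⊆ transl E (-(n • q)) :=
      transl_mono hEA _
    rw [transl_transl] at step
    have : q₀ + n • q + -(n • q) = q₀ := by abel
    rw [this] at step
    exact step.trans hEC
  have key₂ : transl E (-q₀) ⊆ E := by
    have step : transl (transl E (-q₀ + n • q)) (-(n • q)) ⊆ transl E (-(n • q)) :=
      transl_mono hEB _
    rw [transl_transl] at step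
    have : -q₀ + n • q + -(n • q) = -q₀ := by abel
    rw [this] at step
    exact step.trans hEC
  have key₃ : E ⊆ transl E q₀ := by
    have step : transl (transl E (-q₀)) q₀ ⊆ transl E q₀ := transl_mono key₂ _
    rw [transl_transl] at step
    have : -q₀ + q₀ = 0 := by abel
    rw [this, transl_zero] at step
    exact step
  exact hq₀ (key₁.antisymm key₃)
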